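/- arXiv:1808.07601 — 2 statements merged into one kernel-verified Lean document; each statement's English description precedes it below -/
import Mathlib

section
/- Let S be a nonempty finite set and let P : ℝ → S → S → ℝ, T : ℝ → S → ℝ, and π : ℝ → S → ℝ be differentiable in the real parameter t, such that for every t: (i) ∑_{s'} P(t)(s, s') = 1 for every s; (ii) ∑_{s} π(t)(s) = 1 and ∑_{s} π(t)(s) P(t)(s, s') = π(t)(s') for every s' (balance equations); and (iii) there exists d : ℝ → S → ℝ satisfying the Poisson equation d(t)(s) = T(t)(s) − ξ(t) + ∑_{s'} P(t)(s, s') d(t)(s') for every s, where ξ(t) = ∑_{s} π(t)(s) T(t)(s). Then the derivative of the average reward satisfies ξ'(t) = ∑_{s} π(t)(s) · ( T'(t)(s) + ∑_{s'} P'(t)(s, s') · d(t)(s') ). -/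
/-- Policy-gradient formula (Proposition 1, Marbach–Tsitsiklis): under the
balance equations and the Poisson equation, the derivative of the average
reward ξ(t) = ∑_s π(t)(s) T(t)(s) is
ξ'(t) = ∑_s π(t)(s) (T'(t)(s) + ∑_{s'} P'(t)(s,s') d(t)(s')). -/
theorem average_reward_gradient (S : Type*) [Fintype S] [Nonempty S]
    (P : ℝ → S → S → ℝ) (T : ℝ → S → ℝ) (π : ℝ → S → ℝ) (d : ℝ → S → ℝ)
    (hPdiff : ∀ s s', Differentiable ℝ (fun t => P t s s'))
    (hTdiff : ∀ s, Differentiable ℝ (fun t => T t s))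
    (hπdiff : ∀ s, Differentiable ℝ (fun t => π t s))
    (hProw : ∀ t s, ∑ s', P t s s' = 1)
    (hπsum : ∀ t, ∑ s, π t s = 1)
    (hbal : ∀ t s', ∑ s, π t s * P t s s' = π t s')
    (ξ : ℝ → ℝ) (hξ : ∀ t, ξ t = ∑ s, π t s * T t s)
    (hPoisson : ∀ t s, d t s = T t s - ξ t + ∑ s', P t s s' * d t s')
    (t : ℝ) :
    deriv ξ t
      = ∑ s, π t s * (deriv (fun u => T u s) t
          + ∑ s', deriv (fun u => P u s s') t * d t s') := by
  classical
  set π' : S → ℝ := fun s => deriv (fun u => π u s) t with hπ'def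
  set T' : S → ℝ := fun s => deriv (fun u => T u s) t with hT'def
  set P' : S → S → ℝ := fun s s' => deriv (fun u => P u s s') t with hP'def
  -- A : sum of π' is 0
  have hA : ∑ s, π' s = 0 := by
    have h1 : deriv (fun u => ∑ s, π u s) t = ∑ s, π' s := by
      rw [deriv_fun_sum (fun s _ => (hπdiff s).differentiableAt)]
    have h2 : (fun u => ∑ s, π u s) = fun _ => (1 : ℝ) := funext fun u => hπsum u
    rw [h2, deriv_const] at h1
    linarith
  -- B : differentiated balance equations
  have hB : ∀ s', ∑ s, (π' s * P t s s' + π t s * P' s s') = π' s' := by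
    intro s'
    have h2 : (fun u => ∑ s, π u s * P u s s') = fun u => π u s' :=
      funext fun u => hbal u s'
    have h1 : deriv (fun u => ∑ s, π u s * P u s s') t = π' s' := by
      rw [h2]
    rw [deriv_fun_sum (A := fun s u => π u s * P u s s') (fun s _ => ((hπdiff s).mul (hPdiff s s')).differentiableAt)] at h1
    rw [← h1]
    refine Finset.sum_congr rfl fun s _ => ?_
    rw [deriv_fun_mul (hπdiff s).differentiableAt (hPdiff s s').differentiableAt]
  -- C : derivative of ξ
  have hC : deriv ξ t = ∑ s, (π' s * T t s + π t s * T' s) := by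
    have h2 : ξ = fun u => ∑ s, π u s * T u s := funext fun u => hξ u
    rw [h2, deriv_fun_sum (A := fun s u => π u s * T u s) (fun s _ => ((hπdiff s).mul (hTdiff s)).differentiableAt)]
    refine Finset.sum_congr rfl fun s _ => ?_
    rw [deriv_fun_mul (hπdiff s).differentiableAt (hTdiff s).differentiableAt]
  -- Poisson rearranged
  have hT : ∀ s, T t s = d t s + ξ t - ∑ s', P t s s' * d t s' := fun s => by
    have := hPoisson t s; linarith
  -- key identity
  have key : ∑ s, π' s * T t s = ∑ s, π t s * ∑ s', P' s s' * d t s' := by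
    have e2 : ∑ s', (∑ s, (π' s * P t s s' + π t s * P' s s')) * d t s'
        = ∑ s', π' s' * d t s' :=
      Finset.sum_congr rfl fun s' _ => by rw [hB s']
    have e3 : ∑ s', (∑ s, (π' s * P t s s' + π t s * P' s s')) * d t s'
        = (∑ s, ∑ s', π' s * (P t s s' * d t s'))
          + ∑ s, π t s * ∑ s', P' s s' * d t s' := by
      simp only [Finset.sum_mul]
      rw [Finset.sum_comm]
      simp only [add_mul, Finset.sum_add_distrib, Finset.mul_sum, mul_assoc]
    have lhs : ∑ s, π' s * T t s
        = ∑ s, π' s * d t s + (∑ s, π' s) * ξ t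
          - ∑ s, ∑ s', π' s * (P t s s' * d t s') := by
      simp only [hT, mul_add, mul_sub, Finset.sum_add_distrib, Finset.sum_sub_distrib,
        Finset.mul_sum, Finset.sum_mul]
    rw [lhs, hA]
    have := e2.symm.trans e3
    linarith
  rw [hC]
  simp only [mul_add, Finset.sum_add_distrib]
  rw [← key]
  exact add_comm _ _
end

section
/- Let S and A be nonempty finite sets, R : S → A → ℝ a fixed reward, and for each a ∈ A a fixed row-stochastic kernel P_a : S → S → ℝ. Let χ : ℝ → S → A → ℝ be differentiable with χ(t)(s, ·) a probability distribution on A for each t, s, and define T(t)(s) = ∑_a χ(t)(s, a) R(s, a) and P(t)(s, s') = ∑_a χ(t)(s, a) P_a(s, s'). Let π : ℝ → S → ℝ be differentiable with ∑_s π(t)(s) = 1 and ∑_s π(t)(s) P(t)(s, s') = π(t)(s') for all t, s', set ξ(t) = ∑_s π(t)(s) T(t)(s), and suppose d : ℝ → S → ℝ satisfies the Poisson equation d(t)(s) = T(t)(s) − ξ(t) + ∑_{s'} P(t)(s, s') d(t)(s') for all t, s. Define q(t)(s, a) = R(s, a) − ξ(t) + ∑_{s'} P_a(s, s') d(t)(s').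 Then ξ'(t) = ∑_{s ∈ S} ∑_{a ∈ A} π(t)(s) · χ'(t)(s, a) · q(t)(s, a). -/
/-- Policy-gradient expression in terms of the differential action values:
ξ'(t) = ∑_s ∑_a π(t)(s) χ'(t)(s,a) q(t)(s,a). -/
theorem average_reward_gradient_q (S A : Type*) [Fintype S] [Fintype A]
    [Nonempty S] [Nonempty A]
    (R : S → A → ℝ) (Pa : A → S → S → ℝ)
    (hPann : ∀ a s s', 0 ≤ Pa a s s')
    (hParow : ∀ a s, ∑ s', Pa a s s' = 1)
    (χ : ℝ → S → A → ℝ)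
    (hχdiff : ∀ s a, Differentiable ℝ (fun t => χ t s a))
    (hχnn : ∀ t s a, 0 ≤ χ t s a)
    (hχsum : ∀ t s, ∑ a, χ t s a = 1)
    (T : ℝ → S → ℝ) (hT : ∀ t s, T t s = ∑ a, χ t s a * R s a)
    (P : ℝ → S → S → ℝ) (hP : ∀ t s s', P t s s' = ∑ a, χ t s a * Pa a s s')
    (π : ℝ → S → ℝ)
    (hπdiff : ∀ s, Differentiable ℝ (fun t => π t s))
    (hπsum : ∀ t, ∑ s, π t s = 1)
    (hbal : ∀ t s', ∑ s, π t s * P t s s' = π t s')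
    (ξ : ℝ → ℝ) (hξ : ∀ t, ξ t = ∑ s, π t s * T t s)
    (d : ℝ → S → ℝ)
    (hPoisson : ∀ t s, d t s = T t s - ξ t + ∑ s', P t s s' * d t s')
    (q : ℝ → S → A → ℝ)
    (hq : ∀ t s a, q t s a = R s a - ξ t + ∑ s', Pa a s s' * d t s')
    (t : ℝ) :
    deriv ξ t
      = ∑ s, ∑ a, π t s * deriv (fun u => χ u s a) t * q t s a := by
  classical
  set χ' : S → A → ℝ := fun s a => deriv (fun u => χ u s a) t with hχ'def
  set π' : S → ℝ := fun s => deriv (fun u => π u s) t with hπ'def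
  have hχh : ∀ s a, HasDerivAt (fun u => χ u s a) (χ' s a) t :=
    fun s a => (hχdiff s a t).hasDerivAt
  have hπh : ∀ s, HasDerivAt (fun u => π u s) (π' s) t :=
    fun s => (hπdiff s t).hasDerivAt
  -- derivative of row sums of χ is zero
  have hχ'sum : ∀ s, ∑ a, χ' s a = 0 := by
    intro s
    have h1 : HasDerivAt (fun u => ∑ a, χ u s a) (∑ a, χ' s a) t :=
      HasDerivAt.fun_sum (fun a _ => hχh s a)
    have heq : (fun u : ℝ => ∑ a, χ u s a) = fun _ => (1 : ℝ) :=
      funext fun u => hχsum u s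
    have h2 : HasDerivAt (fun u : ℝ => ∑ a, χ u s a) 0 t := by
      rw [heq]; exact hasDerivAt_const t 1
    exact h1.unique h2
  have hπ'sum : ∑ s, π' s = 0 := by
    have h1 : HasDerivAt (fun u => ∑ s, π u s) (∑ s, π' s) t :=
      HasDerivAt.fun_sum (fun s _ => hπh s)
    have heq : (fun u : ℝ => ∑ s, π u s) = fun _ => (1 : ℝ) :=
      funext fun u => hπsum u
    have h2 : HasDerivAt (fun u : ℝ => ∑ s, π u s) 0 t := by
      rw [heq]; exact hasDerivAt_const t 1
    exact h1.unique h2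
  -- derivatives of T and P
  set T' : S → ℝ := fun s => ∑ a, χ' s a * R s a with hT'def
  set P' : S → S → ℝ := fun s s' => ∑ a, χ' s a * Pa a s s' with hP'def
  have hTh : ∀ s, HasDerivAt (fun u => T u s) (T' s) t := by
    intro s
    have heq : (fun u => T u s) = fun u => ∑ a, χ u s a * R s a :=
      funext fun u => hT u s
    rw [heq]
    exact HasDerivAt.fun_sum (fun a _ => (hχh s a).mul_const (R s a))
  have hPh : ∀ s s', HasDerivAt (fun u => P u s s') (P' s s') t := by
    intro s s'
    have heq : (fun u => P u s s') = fun u => ∑ a, χ u s a * Pa a s s' :=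
      funext fun u => hP u s s'
    rw [heq]
    exact HasDerivAt.fun_sum (fun a _ => (hχh s a).mul_const (Pa a s s'))
  -- derivative of ξ
  have hξh : HasDerivAt ξ (∑ s, (π' s * T t s + π t s * T' s)) t := by
    have heq : ξ = fun u => ∑ s, π u s * T u s := funext fun u => hξ u
    rw [heq]
    exact HasDerivAt.fun_sum (fun s _ => (hπh s).mul (hTh s))
  have hderivξ : deriv ξ t = ∑ s, (π' s * T t s + π t s * T' s) := hξh.deriv
  -- differentiated balance equation
  have hbal' : ∀ s', π' s' = ∑ s, (π' s * P t s s' + π t s * P' s s') := by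
    intro s'
    have h1 : HasDerivAt (fun u => ∑ s, π u s * P u s s')
        (∑ s, (π' s * P t s s' + π t s * P' s s')) t :=
      HasDerivAt.fun_sum (fun s _ => (hπh s).mul (hPh s s'))
    have heq : (fun u => ∑ s, π u s * P u s s') = fun u => π u s' :=
      funext fun u => hbal u s'
    rw [heq] at h1
    exact (hπh s').unique h1
  -- key identity: ∑_s π' s * T t s = ∑_s π t s * ∑_{s'} P' s s' * d t s'
  have key : ∑ s, π' s * T t s = ∑ s, π t s * ∑ s', P' s s' * d t s' := by
    have hTval : ∀ s, T t s = d t s + ξ t - ∑ s', P t s s' * d t s' := by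
      intro s; have := hPoisson t s; linarith
    calc ∑ s, π' s * T t s
        = ∑ s, (π' s * d t s + π' s * ξ t - ∑ s', π' s * P t s s' * d t s') := by
          refine Finset.sum_congr rfl fun s _ => ?_
          rw [hTval s, mul_sub, mul_add, Finset.mul_sum]
          congr 1
          exact Finset.sum_congr rfl fun s' _ => (mul_assoc _ _ _).symm
      _ = ∑ s, π' s * d t s + (∑ s, π' s) * ξ t
            - ∑ s', (∑ s, π' s * P t s s') * d t s' := by
          rw [Finset.sum_sub_distrib, Finset.sum_add_distrib, ← Finset.sum_mul]
          congr 1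
          rw [Finset.sum_comm]
          exact Finset.sum_congr rfl fun s' _ => (Finset.sum_mul _ _ _).symm
      _ = ∑ s', π' s' * d t s'
            - ∑ s', (π' s' - ∑ s, π t s * P' s s') * d t s' := by
          rw [hπ'sum, zero_mul, add_zero]
          refine congrArg _ (Finset.sum_congr rfl fun s' _ => ?_)
          congr 1
          have h := hbal' s'
          rw [Finset.sum_add_distrib] at h
          linarith
      _ = ∑ s', (∑ s, π t s * P' s s') * d t s' := by
          simp_rw [sub_mul]
          rw [Finset.sum_sub_distrib]
          ring
      _ = ∑ s, π t s * ∑ s', P' s s' * d t s' := by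
          simp_rw [Finset.sum_mul]
          rw [Finset.sum_comm]
          simp_rw [Finset.mul_sum, mul_assoc]
  -- expand the RHS
  have hRHS : ∀ s, ∑ a, π t s * χ' s a * q t s a
      = π t s * T' s + π t s * ∑ s', P' s s' * d t s' := by
    intro s
    have h1 : ∑ a, π t s * χ' s a * q t s a
        = π t s * ∑ a, χ' s a * (R s a - ξ t + ∑ s', Pa a s s' * d t s') := by
      rw [Finset.mul_sum]
      refine Finset.sum_congr rfl fun a _ => ?_
      rw [hq t s a]; ring
    have hswap : ∑ a, χ' s a * ∑ s', Pa a s s' * d t s'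
        = ∑ s', P' s s' * d t s' := by
      simp_rw [Finset.mul_sum]
      rw [Finset.sum_comm]
      refine Finset.sum_congr rfl fun s' _ => ?_
      simp_rw [hP'def, Finset.sum_mul]
      exact Finset.sum_congr rfl fun a _ => by ring
    have h2 : ∑ a, χ' s a * (R s a - ξ t + ∑ s', Pa a s s' * d t s')
        = T' s - (∑ a, χ' s a) * ξ t + ∑ s', P' s s' * d t s' := by
      calc ∑ a, χ' s a * (R s a - ξ t + ∑ s', Pa a s s' * d t s')
          = ∑ a, (χ' s a * R s a - χ' s a * ξ t
              + χ' s a * ∑ s', Pa a s s' * d t s') :=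
            Finset.sum_congr rfl fun a _ => by ring
        _ = T' s - (∑ a, χ' s a) * ξ t + ∑ s', P' s s' * d t s' := by
            rw [Finset.sum_add_distrib, Finset.sum_sub_distrib,
              ← Finset.sum_mul, hswap]
    rw [h1, h2, hχ'sum s, zero_mul, sub_zero, mul_add]
  rw [hderivξ]
  rw [Finset.sum_congr rfl (fun s _ => hRHS s)]
  rw [Finset.sum_add_distrib, Finset.sum_add_distrib, key]
  ring
end
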